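/- The weight W^{(α,ν)} is irreducible: if T ∈ Mat_N(ℂ) satisfies T W^{(α,ν)}(x) = W^{(α,ν)}(x) T^* for all x ∈ ℝ, then T = c I for some real number c. -/

import Mathlib

open Polynomial Matrix MeasureTheory

/-- Physicists' Hermite polynomials `H_n`, with generating function `exp (2xt - t²)`;
equivalently `H_0 = 1`, `H_{n+1}(x) = 2x H_n(x) - H_n'(x)`. -/
noncomputable def physHermite : ℕ → Polynomial ℂ
  | 0 => 1
  | n + 1 => Polynomial.C 2 * Polynomial.X * physHermite n -
      Polynomial.derivative (physHermite n)

/-- The lower triangular matrix `L(x)` with entries `L(x)_{m,n} = H_{m-n}(x)/(m-n)!`. -/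
noncomputable def Lmat (N : ℕ) (z : ℂ) : Matrix (Fin N) (Fin N) ℂ :=
  Matrix.of fun m n =>
    if (n : ℕ) ≤ (m : ℕ) then
      (physHermite ((m : ℕ) - (n : ℕ))).eval z / (Nat.factorial ((m : ℕ) - (n : ℕ)) : ℂ)
    else 0

/-- The matrix `A = 2 ∑_{j=2}^N E_{j,j-1}`. -/
def Amat (N : ℕ) : Matrix (Fin N) (Fin N) ℂ :=
  Matrix.of fun m n => if (m : ℕ) = (n : ℕ) + 1 then 2 else 0

/-- The diagonal matrix `J = diag(1, 2, …, N)`. -/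
def Jmat (N : ℕ) : Matrix (Fin N) (Fin N) ℂ :=
  Matrix.diagonal fun k => ((k : ℕ) + 1 : ℂ)

/-- `S^α = diag(α_1, …, α_N)`. -/
noncomputable def Smat {N : ℕ} (α : Fin N → ℝ) : Matrix (Fin N) (Fin N) ℂ :=
  Matrix.diagonal fun k => (α k : ℂ)

/-- `L^α(x) = S^α L(x) (S^α)⁻¹`. -/
noncomputable def LmatAlpha {N : ℕ} (α : Fin N → ℝ) (x : ℝ) : Matrix (Fin N) (Fin N) ℂ :=
  Smat α * Lmat N (x : ℂ) * (Smat α)⁻¹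

/-- `A^α = S^α A (S^α)⁻¹`. -/
noncomputable def AmatAlpha {N : ℕ} (α : Fin N → ℝ) : Matrix (Fin N) (Fin N) ℂ :=
  Smat α * Amat N * (Smat α)⁻¹

/-- The weight `W^{(α,ν)}(x) = e^{-x²} L^α(x) Δ (L^α(x))^*` where `Δ = diag(δ_1, …, δ_N)`. -/
noncomputable def Wmat {N : ℕ} (α : Fin N → ℝ) (δ : Fin N → ℝ) (x : ℝ) :
    Matrix (Fin N) (Fin N) ℂ :=
  (Real.exp (-x ^ 2) : ℂ) •
    (LmatAlpha α x * Matrix.diagonal (fun k => (δ k : ℂ)) * (LmatAlpha α x)ᴴ)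

/-- Evaluation of a matrix-valued polynomial at a real point. -/
noncomputable def evalM {N : ℕ} (P : Polynomial (Matrix (Fin N) (Fin N) ℂ)) (x : ℝ) :
    Matrix (Fin N) (Fin N) ℂ :=
  Polynomial.eval ((x : ℂ) • (1 : Matrix (Fin N) (Fin N) ℂ)) P

/-- Entrywise integral over `ℝ` (Lebesgue measure) of a matrix-valued function. -/
noncomputable def mInt {N : ℕ} (f : ℝ → Matrix (Fin N) (Fin N) ℂ) :
    Matrix (Fin N) (Fin N) ℂ :=
  Matrix.of fun i j => ∫ x : ℝ, f x i j

/-- Rising factorial (Pochhammer symbol) `(a)_k = a (a+1) ⋯ (a+k-1)`. -/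
noncomputable def risingFactorial (a : ℂ) (k : ℕ) : ℂ :=
  ∏ i ∈ Finset.range k, (a + i)

/-- `P` is the monic matrix-valued orthogonal polynomial of degree `n`
for the weight `Wf`: it is monic of degree `n` and `∫ P(x) Wf(x) xᵖ dx = 0` for `p < n`. -/
def IsMonicOrthPoly {N : ℕ} (Wf : ℝ → Matrix (Fin N) (Fin N) ℂ) (n : ℕ)
    (P : Polynomial (Matrix (Fin N) (Fin N) ℂ)) : Prop :=
  P.Monic ∧ P.natDegree = n ∧
    ∀ p < n, mInt (fun x => (x : ℂ) ^ p • (evalM P x * Wf x)) = 0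

lemma physHermite_succ (n : ℕ) : physHermite (n + 1) =
    Polynomial.C 2 * Polynomial.X * physHermite n -
      Polynomial.derivative (physHermite n) := rfl

lemma physHermite_coeff_natDegree :
    ∀ n : ℕ, (physHermite n).coeff n = 2 ^ n ∧ (physHermite n).natDegree = n := by
  intro n
  induction n with
  | zero => simp [physHermite]
  | succ n ih =>
    obtain ⟨hc, hd⟩ := ih
    have hdegmul : (Polynomial.C (2:ℂ) * Polynomial.X * physHermite n).natDegree ≤ n + 1 := by
      calc (Polynomial.C (2:ℂ) * Polynomial.X * physHermite n).natDegree
          ≤ (Polynomial.C (2:ℂ) * Polynomial.X).natDegree + (physHermite n).natDegree :=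
            Polynomial.natDegree_mul_le
        _ ≤ 1 + n := by
            have h1 : (Polynomial.C (2:ℂ) * Polynomial.X).natDegree ≤ 1 := by
              simpa using Polynomial.natDegree_C_mul_le (2:ℂ) Polynomial.X
            omega
        _ = n + 1 := by omega
    have hcoeff : (physHermite (n+1)).coeff (n+1) = 2 ^ (n+1) := by
      rw [physHermite_succ, Polynomial.coeff_sub]
      have h1 : (Polynomial.C (2:ℂ) * Polynomial.X * physHermite n).coeff (n+1) = 2 * 2 ^ n := by
        rw [mul_assoc, Polynomial.coeff_C_mul, Polynomial.coeff_X_mul, hc]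
      have h2 : ((physHermite n).derivative).coeff (n+1) = 0 := by
        apply Polynomial.coeff_eq_zero_of_natDegree_lt
        have := Polynomial.natDegree_derivative_le (physHermite n)
        omega
      rw [h1, h2]; ring
    refine ⟨hcoeff, le_antisymm ?_ ?_⟩
    · rw [physHermite_succ]
      refine le_trans (Polynomial.natDegree_sub_le _ _) ?_
      have := Polynomial.natDegree_derivative_le (physHermite n)
      omega
    · apply Polynomial.le_natDegree_of_ne_zero
      rw [hcoeff]
      exact pow_ne_zero _ two_ne_zero

lemma physHermite_natDegree (n : ℕ) : (physHermite n).natDegree = n :=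
  (physHermite_coeff_natDegree n).2

lemma physHermite_coeff_self (n : ℕ) : (physHermite n).coeff n = 2 ^ n :=
  (physHermite_coeff_natDegree n).1

lemma physHermite_coeff_eq_zero {n d : ℕ} (h : n < d) : (physHermite n).coeff d = 0 :=
  Polynomial.coeff_eq_zero_of_natDegree_lt (by rw [physHermite_natDegree]; exact h)

lemma physHermite_map_conj (n : ℕ) :
    (physHermite n).map (starRingEnd ℂ) = physHermite n := by
  induction n with
  | zero => simp [physHermite]
  | succ n ih =>
    rw [physHermite_succ, Polynomial.map_sub, Polynomial.map_mul,
      Polynomial.map_mul, Polynomial.map_C, Polynomial.map_X, ← Polynomial.derivative_map, ih]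
    rw [map_ofNat (starRingEnd ℂ) 2]

lemma conj_eval_physHermite (n : ℕ) (x : ℝ) :
    (starRingEnd ℂ) ((physHermite n).eval (x:ℂ)) = (physHermite n).eval (x:ℂ) := by
  calc (starRingEnd ℂ) ((physHermite n).eval (x:ℂ))
      = (physHermite n).eval₂ (starRingEnd ℂ) ((starRingEnd ℂ) (x:ℂ)) :=
        (Polynomial.eval₂_hom _ _).symm
    _ = ((physHermite n).map (starRingEnd ℂ)).eval (x:ℂ) := by
        rw [Complex.conj_ofReal, Polynomial.eval_map]
    _ = (physHermite n).eval (x:ℂ) := by rw [physHermite_map_conj]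

/-- `h_k = H_k / k!`. -/
noncomputable def hp (k : ℕ) : Polynomial ℂ :=
  Polynomial.C ((Nat.factorial k : ℂ)⁻¹) * physHermite k

lemma hp_natDegree (k : ℕ) : (hp k).natDegree = k := by
  rw [hp, Polynomial.natDegree_C_mul (by
    simp [Nat.factorial_ne_zero]), physHermite_natDegree]

lemma hp_coeff_self (k : ℕ) : (hp k).coeff k = (Nat.factorial k : ℂ)⁻¹ * 2 ^ k := by
  rw [hp, Polynomial.coeff_C_mul, physHermite_coeff_self]

lemma hp_coeff_self_ne_zero (k : ℕ) : (hp k).coeff k ≠ 0 := by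
  rw [hp_coeff_self]
  exact mul_ne_zero (inv_ne_zero (by exact_mod_cast Nat.factorial_ne_zero k))
    (pow_ne_zero _ two_ne_zero)

lemma hp_coeff_eq_zero {k d : ℕ} (h : k < d) : (hp k).coeff d = 0 :=
  Polynomial.coeff_eq_zero_of_natDegree_lt (by rw [hp_natDegree]; exact h)

lemma hp_eval_eq (k : ℕ) (z : ℂ) :
    (hp k).eval z = (physHermite k).eval z / (Nat.factorial k : ℂ) := by
  rw [hp, Polynomial.eval_mul, Polynomial.eval_C]
  ring

lemma conj_eval_hp (k : ℕ) (x : ℝ) :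
    (starRingEnd ℂ) ((hp k).eval (x:ℂ)) = (hp k).eval (x:ℂ) := by
  rw [hp_eval_eq, map_div₀, conj_eval_physHermite, map_natCast]

/-- entry polynomial of `L^α(x)`. -/
noncomputable def ep {N : ℕ} (α : Fin N → ℝ) (m j : Fin N) : Polynomial ℂ :=
  if (j : ℕ) ≤ (m : ℕ) then
    Polynomial.C ((α m : ℂ) * (α j : ℂ)⁻¹) * hp ((m : ℕ) - (j : ℕ))
  else 0

/-- entry polynomial of `L^α(x) Δ (L^α(x))ᴴ`. -/
noncomputable def Qp {N : ℕ} (α : Fin N → ℝ) (δ' : Fin N → ℝ) (m k : Fin N) :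
    Polynomial ℂ :=
  ∑ j : Fin N, Polynomial.C (δ' j : ℂ) * (ep α m j * ep α k j)

lemma ep_natDegree_le {N : ℕ} (α : Fin N → ℝ) (m j : Fin N) :
    (ep α m j).natDegree ≤ (m : ℕ) - (j : ℕ) := by
  rw [ep]
  split
  · exact le_trans (Polynomial.natDegree_C_mul_le _ _) (le_of_eq (hp_natDegree _))
  · simp

lemma Qp_natDegree_le {N : ℕ} (α : Fin N → ℝ) (δ' : Fin N → ℝ) (m k : Fin N) :
    (Qp α δ' m k).natDegree ≤ (m : ℕ) + (k : ℕ) := by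
  apply Polynomial.natDegree_sum_le_of_forall_le
  intro j _
  refine le_trans (Polynomial.natDegree_mul_le) ?_
  simp only [Polynomial.natDegree_C, zero_add]
  refine le_trans (Polynomial.natDegree_mul_le) ?_
  have h1 := ep_natDegree_le α m j
  have h2 := ep_natDegree_le α k j
  omega

lemma Qp_coeff_eq_zero {N : ℕ} (α : Fin N → ℝ) (δ' : Fin N → ℝ) {m k : Fin N} {d : ℕ}
    (h : (m : ℕ) + (k : ℕ) < d) : (Qp α δ' m k).coeff d = 0 :=
  Polynomial.coeff_eq_zero_of_natDegree_lt (lt_of_le_of_lt (Qp_natDegree_le α δ' m k) h)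

lemma Qp_coeff_top {N : ℕ} (hN : 0 < N) (α : Fin N → ℝ) (δ' : Fin N → ℝ)
    (hα : ∀ k, α k ≠ 0) (hδ0 : δ' ⟨0, hN⟩ ≠ 0) (m k : Fin N) :
    (Qp α δ' m k).coeff ((m : ℕ) + (k : ℕ)) ≠ 0 := by
  have hz : (⟨0, hN⟩ : Fin N) ∈ Finset.univ := Finset.mem_univ _
  rw [Qp, Polynomial.finset_sum_coeff, Finset.sum_eq_single (⟨0, hN⟩ : Fin N)]
  · -- the j = 0 term is nonzero
    have h0m : ((⟨0, hN⟩ : Fin N) : ℕ) ≤ (m : ℕ) := Nat.zero_le _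
    have h0k : ((⟨0, hN⟩ : Fin N) : ℕ) ≤ (k : ℕ) := Nat.zero_le _
    rw [ep, ep, if_pos h0m, if_pos h0k]
    have hre : (Polynomial.C ((α m : ℂ) * (α ⟨0, hN⟩ : ℂ)⁻¹) * hp ((m : ℕ) - 0)) *
        (Polynomial.C ((α k : ℂ) * (α ⟨0, hN⟩ : ℂ)⁻¹) * hp ((k : ℕ) - 0)) =
        Polynomial.C (((α m : ℂ) * (α ⟨0, hN⟩ : ℂ)⁻¹) * ((α k : ℂ) * (α ⟨0, hN⟩ : ℂ)⁻¹)) *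
          (hp (m : ℕ) * hp (k : ℕ)) := by
      simp only [Nat.sub_zero, Polynomial.C_mul]
      ring
    rw [hre, Polynomial.coeff_C_mul, Polynomial.coeff_C_mul]
    have htop : (hp (m : ℕ) * hp (k : ℕ)).coeff ((m : ℕ) + (k : ℕ)) =
        (hp (m : ℕ)).coeff (m : ℕ) * (hp (k : ℕ)).coeff (k : ℕ) := by
      conv_lhs => rw [show ((m : ℕ) + (k : ℕ)) = (hp (m : ℕ)).natDegree + (hp (k : ℕ)).natDegree
        by rw [hp_natDegree, hp_natDegree]]
      rw [Polynomial.coeff_mul_degree_add_degree, Polynomial.leadingCoeff, Polynomial.leadingCoeff,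
        hp_natDegree, hp_natDegree]
    rw [htop]
    have hα0 : (α ⟨0, hN⟩ : ℂ) ≠ 0 := Complex.ofReal_ne_zero.mpr (hα _)
    exact mul_ne_zero (Complex.ofReal_ne_zero.mpr hδ0)
      (mul_ne_zero
        (mul_ne_zero (mul_ne_zero (Complex.ofReal_ne_zero.mpr (hα m)) (inv_ne_zero hα0))
          (mul_ne_zero (Complex.ofReal_ne_zero.mpr (hα k)) (inv_ne_zero hα0)))
        (mul_ne_zero (hp_coeff_self_ne_zero _) (hp_coeff_self_ne_zero _)))
  · -- other terms vanish
    intro j _ hj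
    rw [Polynomial.coeff_C_mul]
    have Hj : 1 ≤ (j : ℕ) := by
      rcases Nat.eq_zero_or_pos (j : ℕ) with h | h
      · exact absurd (Fin.ext h) hj
      · exact h
    by_cases hjm : (j : ℕ) ≤ (m : ℕ) ∧ (j : ℕ) ≤ (k : ℕ)
    · have : (ep α m j * ep α k j).coeff ((m : ℕ) + (k : ℕ)) = 0 := by
        apply Polynomial.coeff_eq_zero_of_natDegree_lt
        have h1 := ep_natDegree_le α m j
        have h2 := ep_natDegree_le α k j
        refine lt_of_le_of_lt Polynomial.natDegree_mul_le ?_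
        omega
      rw [this, mul_zero]
    · have : ep α m j * ep α k j = 0 := by
        rcases not_and_or.mp hjm with h | h
        · rw [ep, if_neg h, zero_mul]
        · rw [show ep α k j = 0 by rw [ep, if_neg h], mul_zero]
      rw [this]
      simp
  · intro h
    exact absurd hz h

lemma Smat_inv {N : ℕ} (α : Fin N → ℝ) (hα : ∀ k, α k ≠ 0) :
    (Smat α)⁻¹ = Matrix.diagonal fun k => ((α k : ℂ))⁻¹ := by
  apply Matrix.inv_eq_right_inv
  rw [Smat, Matrix.diagonal_mul_diagonal]
  rw [show (fun k : Fin N => (α k : ℂ) * ((α k : ℂ))⁻¹) = fun _ => 1 from funext fun k =>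
    mul_inv_cancel₀ (Complex.ofReal_ne_zero.mpr (hα k))]
  exact Matrix.diagonal_one

lemma LmatAlpha_apply {N : ℕ} (α : Fin N → ℝ) (hα : ∀ k, α k ≠ 0) (x : ℝ) (m j : Fin N) :
    LmatAlpha α x m j = (ep α m j).eval (x : ℂ) := by
  rw [LmatAlpha, Smat_inv α hα, Matrix.mul_diagonal, Smat, Matrix.diagonal_mul, Lmat]
  rw [Matrix.of_apply, ep]
  split
  · rw [Polynomial.eval_mul, Polynomial.eval_C, hp_eval_eq]
    ring
  · simp

lemma conj_ep_eval {N : ℕ} (α : Fin N → ℝ) (x : ℝ) (m j : Fin N) :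
    (starRingEnd ℂ) ((ep α m j).eval (x : ℂ)) = (ep α m j).eval (x : ℂ) := by
  rw [ep]
  split
  · rw [Polynomial.eval_mul, Polynomial.eval_C, _root_.map_mul, _root_.map_mul, map_inv₀,
      Complex.conj_ofReal, Complex.conj_ofReal, conj_eval_hp]
  · simp

lemma Qp_eval {N : ℕ} (α : Fin N → ℝ) (δ' : Fin N → ℝ) (hα : ∀ k, α k ≠ 0)
    (x : ℝ) (m k : Fin N) :
    (Qp α δ' m k).eval (x : ℂ) =
      (LmatAlpha α x * Matrix.diagonal (fun k => (δ' k : ℂ)) * (LmatAlpha α x)ᴴ) m k := by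
  rw [Matrix.mul_apply, Qp, Polynomial.eval_finset_sum]
  apply Finset.sum_congr rfl
  intro j _
  rw [Matrix.mul_diagonal, Matrix.conjTranspose_apply, LmatAlpha_apply α hα,
    LmatAlpha_apply α hα, show star ((ep α k j).eval (x:ℂ)) = (ep α k j).eval (x:ℂ) from conj_ep_eval α x k j, Polynomial.eval_mul, Polynomial.eval_mul,
    Polynomial.eval_C]
  ring


theorem aux_main
    (N : ℕ) (hN : 0 < N) (α : Fin N → ℝ) (hα : ∀ k, α k ≠ 0) (hα1 : α ⟨0, hN⟩ = 1)
    (δ' : Fin N → ℝ) (hδ : ∀ i, 0 < δ' i)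
    (T : Matrix (Fin N) (Fin N) ℂ)
    (hT : ∀ x : ℝ, T * ((Real.exp (-x ^ 2) : ℂ) •
      (LmatAlpha α x * Matrix.diagonal (fun k => (δ' k : ℂ)) * (LmatAlpha α x)ᴴ)) =
      ((Real.exp (-x ^ 2) : ℂ) •
      (LmatAlpha α x * Matrix.diagonal (fun k => (δ' k : ℂ)) * (LmatAlpha α x)ᴴ)) * Tᴴ) :
    ∃ r : ℝ, T = (r : ℂ) • (1 : Matrix (Fin N) (Fin N) ℂ) := by
  set z0 : Fin N := ⟨0, hN⟩ with hz0
  have hδ0 : δ' z0 ≠ 0 := (hδ z0).ne'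
  -- Step 1: cancel the exponential factor
  have hP : ∀ x : ℝ, T * (LmatAlpha α x * Matrix.diagonal (fun k => (δ' k : ℂ)) *
      (LmatAlpha α x)ᴴ) = (LmatAlpha α x * Matrix.diagonal (fun k => (δ' k : ℂ)) *
      (LmatAlpha α x)ᴴ) * Tᴴ := by
    intro x
    have h := hT x
    rw [Matrix.mul_smul, Matrix.smul_mul] at h
    exact smul_right_injective _ (by
      exact_mod_cast Complex.ofReal_ne_zero.mpr (Real.exp_ne_zero _)) h
  -- Step 2: polynomial identities, one for each row m
  have key : ∀ m : Fin N, (∑ k : Fin N, Polynomial.C (T m k) * Qp α δ' k z0) =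
      ∑ k : Fin N, Polynomial.C ((starRingEnd ℂ) (T z0 k)) * Qp α δ' m k := by
    intro m
    have hdiff : (∑ k : Fin N, Polynomial.C (T m k) * Qp α δ' k z0) -
        (∑ k : Fin N, Polynomial.C ((starRingEnd ℂ) (T z0 k)) * Qp α δ' m k) = 0 := by
      apply Polynomial.eq_zero_of_infinite_isRoot
      apply Set.Infinite.mono (s := Set.range (fun x : ℝ => (x : ℂ)))
      · rintro z ⟨x, rfl⟩
        show Polynomial.IsRoot _ _
        rw [Polynomial.IsRoot, Polynomial.eval_sub, Polynomial.eval_finset_sum,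
          Polynomial.eval_finset_sum]
        have hl : ∀ k : Fin N, (Polynomial.C (T m k) * Qp α δ' k z0).eval (x : ℂ) =
            T m k * (LmatAlpha α x * Matrix.diagonal (fun k => (δ' k : ℂ)) *
              (LmatAlpha α x)ᴴ) k z0 := fun k => by
          rw [Polynomial.eval_mul, Polynomial.eval_C, Qp_eval α δ' hα]
        have hr : ∀ k : Fin N, (Polynomial.C ((starRingEnd ℂ) (T z0 k)) *
            Qp α δ' m k).eval (x : ℂ) =
            (LmatAlpha α x * Matrix.diagonal (fun k => (δ' k : ℂ)) *
              (LmatAlpha α x)ᴴ) m k * (starRingEnd ℂ) (T z0 k) := fun k => by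
          rw [Polynomial.eval_mul, Polynomial.eval_C, Qp_eval α δ' hα]; ring
        rw [Finset.sum_congr rfl (fun k _ => hl k), Finset.sum_congr rfl (fun k _ => hr k)]
        have := congrFun (congrFun (hP x) m) z0
        rw [Matrix.mul_apply, Matrix.mul_apply] at this
        rw [sub_eq_zero]
        refine this.trans (Finset.sum_congr rfl fun k _ => ?_)
        rw [Matrix.conjTranspose_apply]
        rfl
      · exact Set.infinite_range_of_injective Complex.ofReal_injective
    exact sub_eq_zero.mp hdiff
  -- Step 3: cascade A : off-0 entries of row z0 vanish
  have hlast : N - 1 < N := by omega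
  set lst : Fin N := ⟨N - 1, hlast⟩ with hlst
  have hA : ∀ k : Fin N, k ≠ z0 → T z0 k = 0 := by
    have desc : ∀ (M : ℕ) (k : Fin N), N ≤ (k : ℕ) + M → k ≠ z0 → T z0 k = 0 := by
      intro M
      induction M with
      | zero => intro k hk _; exact absurd k.isLt (by omega)
      | succ M ih =>
        intro k hk hkz
        have h1 : 1 ≤ (k : ℕ) := by
          rcases Nat.eq_zero_or_pos (k : ℕ) with h | h
          · exact absurd (Fin.ext (h.trans rfl.symm) : k = z0) hkz
          · exact h
        have hco := congrArg (fun p => Polynomial.coeff p ((N - 1) + (k : ℕ))) (key lst)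
        simp only [Polynomial.finset_sum_coeff, Polynomial.coeff_C_mul] at hco
        have hLHS : ∑ k' : Fin N, T lst k' * (Qp α δ' k' z0).coeff ((N - 1) + (k : ℕ)) = 0 := by
          apply Finset.sum_eq_zero
          intro k' _
          rw [Qp_coeff_eq_zero α δ' (by
            have := k'.isLt
            simp only [hz0]
            omega), mul_zero]
        rw [hLHS] at hco
        have hRHS : ∑ k' : Fin N, (starRingEnd ℂ) (T z0 k') *
            (Qp α δ' lst k').coeff ((N - 1) + (k : ℕ)) =
            (starRingEnd ℂ) (T z0 k) * (Qp α δ' lst k).coeff ((N - 1) + (k : ℕ)) := by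
          apply Finset.sum_eq_single
          · intro k' _ hk'
            rcases lt_or_gt_of_ne (fun h : (k' : ℕ) = (k : ℕ) => hk' (Fin.ext h)) with h | h
            · rw [Qp_coeff_eq_zero α δ' (by simp only [hlst]; omega), mul_zero]
            · have : T z0 k' = 0 := by
                apply ih k' (by omega)
                intro hk'z
                rw [hk'z] at h
                simp only [hz0] at h
                omega
              rw [this, map_zero, zero_mul]
          · intro h; exact absurd (Finset.mem_univ k) h
        rw [hRHS] at hco
        have hnz : (Qp α δ' lst k).coeff ((N - 1) + (k : ℕ)) ≠ 0 := by
          have := Qp_coeff_top hN α δ' hα hδ0 lst k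
          simpa only [hlst] using this
        have : (starRingEnd ℂ) (T z0 k) = 0 := by
          rcases mul_eq_zero.mp hco.symm with h | h
          · exact h
          · exact absurd h hnz
        simpa using this
    intro k hk
    exact desc N k (by omega) hk
  -- Step 4: cascade B : T i j = (if j = i then conj (T z0 z0) else 0)
  have hB : ∀ m k : Fin N, T m k = if k = m then (starRingEnd ℂ) (T z0 z0) else 0 := by
    intro m
    have keym : ∀ d : ℕ, ∑ k : Fin N, (T m k - if k = m then (starRingEnd ℂ) (T z0 z0) else 0) *
        (Qp α δ' k z0).coeff d = 0 := by
      intro d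
      have hco := congrArg (fun p => Polynomial.coeff p d) (key m)
      simp only [Polynomial.finset_sum_coeff, Polynomial.coeff_C_mul] at hco
      have hRHS : ∑ k : Fin N, (starRingEnd ℂ) (T z0 k) * (Qp α δ' m k).coeff d =
          (starRingEnd ℂ) (T z0 z0) * (Qp α δ' m z0).coeff d := by
        apply Finset.sum_eq_single
        · intro k _ hk
          rw [hA k hk, map_zero, zero_mul]
        · intro h; exact absurd (Finset.mem_univ z0) h
      rw [hRHS] at hco
      have hsplit : ∑ k : Fin N, (T m k - if k = m then (starRingEnd ℂ) (T z0 z0) else 0) *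
          (Qp α δ' k z0).coeff d =
          (∑ k : Fin N, T m k * (Qp α δ' k z0).coeff d) -
          (starRingEnd ℂ) (T z0 z0) * (Qp α δ' m z0).coeff d := by
        simp [sub_mul, Finset.sum_sub_distrib, ite_mul, zero_mul, Finset.sum_ite_eq',
          Finset.mem_univ]
      rw [hsplit, hco, sub_self]
    have desc2 : ∀ (M : ℕ) (k : Fin N), N ≤ (k : ℕ) + M →
        T m k - (if k = m then (starRingEnd ℂ) (T z0 z0) else 0) = 0 := by
      intro M
      induction M with
      | zero => intro k hk; exact absurd k.isLt (by omega)
      | succ M ih =>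
        intro k hk
        have hco := keym (k : ℕ)
        have hone : ∑ k' : Fin N, (T m k' - if k' = m then (starRingEnd ℂ) (T z0 z0) else 0) *
            (Qp α δ' k' z0).coeff (k : ℕ) =
            (T m k - if k = m then (starRingEnd ℂ) (T z0 z0) else 0) *
            (Qp α δ' k z0).coeff (k : ℕ) := by
          apply Finset.sum_eq_single
          · intro k' _ hk'
            rcases lt_or_gt_of_ne (fun h : (k' : ℕ) = (k : ℕ) => hk' (Fin.ext h)) with h | h
            · rw [Qp_coeff_eq_zero α δ' (by simp only [hz0]; omega), mul_zero]
            · rw [ih k' (by omega), zero_mul]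
          · intro h; exact absurd (Finset.mem_univ k) h
        rw [hone] at hco
        have hnz : (Qp α δ' k z0).coeff (k : ℕ) ≠ 0 := by
          have := Qp_coeff_top hN α δ' hα hδ0 k z0
          simpa only [hz0, add_zero] using this
        rcases mul_eq_zero.mp hco with h | h
        · exact h
        · exact absurd h hnz
    intro k
    have := desc2 N k (by omega)
    have h2 := sub_eq_zero.mp this
    exact h2
  -- Step 5: assemble
  have hreal : T z0 z0 = (starRingEnd ℂ) (T z0 z0) := by
    have := hB z0 z0
    simpa using this
  refine ⟨(T z0 z0).re, ?_⟩
  ext i j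
  rw [Matrix.smul_apply, Matrix.one_apply, hB i j]
  have hre : ((T z0 z0).re : ℂ) = T z0 z0 := Complex.conj_eq_iff_re.mp hreal.symm
  by_cases h : j = i
  · rw [if_pos h, if_pos h.symm, ← hreal, smul_eq_mul, mul_one, hre]
  · rw [if_neg h, if_neg (fun hh : i = j => h hh.symm), smul_eq_mul, mul_zero]


/-- Proposition 3.15: irreducibility of the weight `W^{(α,ν)}`: any `T` with
`T W^{(α,ν)}(x) = W^{(α,ν)}(x) T^*` for all `x` is a real multiple of the identity. -/
theorem stmt_17
    (N : ℕ) (hN : 0 < N) (α : Fin N → ℝ) (hα : ∀ k, α k ≠ 0) (hα1 : α ⟨0, hN⟩ = 1)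
    (c d : ℕ → ℝ) (hc : ∀ k, 0 < c k) (hd : ∀ k, 0 < d k)
    (δ : ℕ → Fin N → ℝ) (hδ : ∀ k i, 0 < δ k i)
    (hΔ : ∀ (k : ℕ) (i : Fin N), δ (k + 1) i = (d k * ((i : ℕ) + 1) + c k) * δ k i)
    (hrel : ∀ (k : ℕ) (j : ℕ) (h : j + 1 < N),
      (α ⟨j + 1, h⟩) ^ 2 / (α ⟨j, Nat.lt_of_succ_lt h⟩) ^ 2 =
        d k * (j + 1) * ((N : ℝ) - (j + 1)) * δ k ⟨j + 1, h⟩ /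
          (2 * (d k * (j + 1) + c k) * δ k ⟨j, Nat.lt_of_succ_lt h⟩))
    (T : Matrix (Fin N) (Fin N) ℂ)
    (hT : ∀ x : ℝ, T * Wmat α (δ 0) x = Wmat α (δ 0) x * Tᴴ) :
    ∃ r : ℝ, T = (r : ℂ) • (1 : Matrix (Fin N) (Fin N) ℂ) := by
  refine aux_main N hN α hα hα1 (δ 0) (hδ 0) T (fun x => ?_)
  have h := hT x
  rw [Wmat] at h
  exact h
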